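/- For 1 ≤ p < ∞, c > 0, ε > 0 and base metric d, the graph GOSPA distance d^{(c,ε)}, defined by minimizing over the binary assignment matrices 𝒲_{X,Y}, is a metric on the space of undirected unweighted graphs with node attributes: for all graphs X, Y, Z, (i) d^{(c,ε)}(X,Y) = 0 if and only if X = Y; (ii) d^{(c,ε)}(X,Y) = d^{(c,ε)}(Y,X); (iii) d^{(c,ε)}(X,Y) ≤ d^{(c,ε)}(X,Z) + d^{(c,ε)}(Z,Y). -/

import Mathlib

open scoped BigOperators Matrix

namespace GraphGOSPA

/-- An undirected unweighted graph with node attributes in a metric space `𝕏`: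
a finite list of distinct nodes together with a symmetric `{0,1}`-valued
adjacency matrix with zero diagonal. -/
structure Graph (𝕏 : Type*) [MetricSpace 𝕏] where
  n : ℕ
  nodes : Fin n → 𝕏
  nodes_inj : Function.Injective nodes
  A : Matrix (Fin n) (Fin n) ℝ
  A_symm : A.IsSymm
  A_01 : ∀ i j, A i j = 0 ∨ A i j = 1
  A_diag : ∀ i, A i i = 0

variable {𝕏 : Type*} [MetricSpace 𝕏]

/-- Componentwise 1-norm of a matrix. -/
def onorm {m n : ℕ} (M : Matrix (Fin m) (Fin n) ℝ) : ℝ :=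
  ∑ i, ∑ j, |M i j|

/-- The top-left `m × n` block of an `(m+1) × (n+1)` matrix. -/
def topLeft {m n : ℕ} (W : Matrix (Fin (m+1)) (Fin (n+1)) ℝ) :
    Matrix (Fin m) (Fin n) ℝ :=
  fun i j => W i.castSucc j.castSucc

/-- The set `𝒲_{X,Y}` of binary assignment matrices: entries in `{0,1}`,
each of the first `nY` columns sums to 1, each of the first `nX` rows sums to 1,
and the bottom-right corner is 0. -/
def Wset (nX nY : ℕ) : Set (Matrix (Fin (nX+1)) (Fin (nY+1)) ℝ) :=
  {W | (∀ i j, W i j = 0 ∨ W i j = 1) ∧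
    (∀ j : Fin nY, ∑ i, W i j.castSucc = 1) ∧
    (∀ i : Fin nX, ∑ j, W i.castSucc j = 1) ∧
    W (Fin.last nX) (Fin.last nY) = 0}

/-- The relaxed set `𝒲̄_{X,Y}`: nonnegative entries, with the same
row/column sum constraints and zero bottom-right corner. -/
def WbarSet (nX nY : ℕ) : Set (Matrix (Fin (nX+1)) (Fin (nY+1)) ℝ) :=
  {W | (∀ i j, 0 ≤ W i j) ∧
    (∀ j : Fin nY, ∑ i, W i j.castSucc = 1) ∧
    (∀ i : Fin nX, ∑ j, W i.castSucc j = 1) ∧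
    W (Fin.last nX) (Fin.last nY) = 0}

/-- The cost matrix `D_{X,Y}`. -/
noncomputable def Dmat (p c : ℝ) (X Y : Graph 𝕏) :
    Matrix (Fin (X.n+1)) (Fin (Y.n+1)) ℝ :=
  fun i j =>
    if hi : (i : ℕ) < X.n then
      if hj : (j : ℕ) < Y.n then dist (X.nodes ⟨i, hi⟩) (Y.nodes ⟨j, hj⟩) ^ p
      else c ^ p / 2
    else if (j : ℕ) < Y.n then c ^ p / 2 else 0

/-- The graph GOSPA objective `tr[D_{X,Y}ᵀ W] + (ε^p/2) ‖A_X W' − W' A_Y‖`. -/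
noncomputable def obj (p c ε : ℝ) (X Y : Graph 𝕏)
    (W : Matrix (Fin (X.n+1)) (Fin (Y.n+1)) ℝ) : ℝ :=
  Matrix.trace ((Dmat p c X Y)ᵀ * W) +
    ε ^ p / 2 * onorm (X.A * topLeft W - topLeft W * Y.A)

/-- The graph GOSPA distance (minimum over binary assignment matrices). -/
noncomputable def gospa (p c ε : ℝ) (X Y : Graph 𝕏) : ℝ :=
  sInf {v | ∃ W ∈ Wset X.n Y.n, v = obj p c ε X Y W} ^ (1 / p)

/-- The LP graph GOSPA distance (minimum over relaxed assignment matrices). -/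
noncomputable def gospaLP (p c ε : ℝ) (X Y : Graph 𝕏) : ℝ :=
  sInf {v | ∃ W ∈ WbarSet X.n Y.n, v = obj p c ε X Y W} ^ (1 / p)

/-- The node set of a graph. -/
def nodeSet (X : Graph 𝕏) : Set 𝕏 := Set.range X.nodes

/-- The edge set of a graph, as a set of unordered pairs of attributes. -/
def edgeSet (X : Graph 𝕏) : Set (Sym2 𝕏) :=
  {e | ∃ i j, X.A i j = 1 ∧ e = s(X.nodes i, X.nodes j)}

/-- Two graphs are equal when they have the same node set and the same edge set. -/
def GraphEq (X Y : Graph 𝕏) : Prop :=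
  nodeSet X = nodeSet Y ∧ edgeSet X = edgeSet Y

/-! ### Partial injections and their inverses -/

/-- A partial function is a "partial injection" if it is injective on its domain. -/
def pinj {m n : ℕ} (f : Fin m → Option (Fin n)) : Prop :=
  ∀ ⦃i i' j⦄, f i = some j → f i' = some j → i = i'

open Classical in
/-- Partial inverse of a partial function. -/
noncomputable def finv {m n : ℕ} (f : Fin m → Option (Fin n)) (j : Fin n) :
    Option (Fin m) :=
  if h : ∃ i, f i = some j then some h.choose else none

lemma finv_some_imp {m n : ℕ} {f : Fin m → Option (Fin n)} {j : Fin n} {i : Fin m}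
    (h : finv f j = some i) : f i = some j := by
  unfold finv at h
  split at h
  · rename_i hex
    obtain rfl : hex.choose = i := by simpa using h
    exact hex.choose_spec
  · simp at h

lemma finv_some_of {m n : ℕ} {f : Fin m → Option (Fin n)} (hf : pinj f)
    {j : Fin n} {i : Fin m} (h : f i = some j) : finv f j = some i := by
  unfold finv
  split
  · rename_i hex
    exact congrArg _ (hf hex.choose_spec h)
  · rename_i hex
    exact absurd ⟨i, h⟩ hex

lemma finv_none_iff {m n : ℕ} {f : Fin m → Option (Fin n)} {j : Fin n} :
    finv f j = none ↔ ∀ i, f i ≠ some j := by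
  unfold finv
  split
  · rename_i hex
    simp only [reduceCtorEq, false_iff, not_forall, not_not]
    exact ⟨hex.choose, hex.choose_spec⟩
  · rename_i hex
    push_neg at hex
    simpa using hex

lemma pinj_finv {m n : ℕ} (f : Fin m → Option (Fin n)) : pinj (finv f) := by
  intro j j' i hj hj'
  have h1 := finv_some_imp hj
  have h2 := finv_some_imp hj'
  rw [h1] at h2
  exact (Option.some_inj.mp h2)

/-- Reindexing a sum over the domain of a partial injection by its inverse. -/
lemma sum_elim_eq {m n : ℕ} {f : Fin m → Option (Fin n)} (hf : pinj f)
    (F : Fin m → Fin n → ℝ) :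
    ∑ i, (f i).elim 0 (F i) = ∑ j, (finv f j).elim 0 (fun i => F i j) := by
  have step1 : ∀ i, (f i).elim 0 (F i) = ∑ j, if f i = some j then F i j else 0 := by
    intro i
    cases hfi : f i with
    | none => simp
    | some j0 => simp [Finset.sum_ite_eq' Finset.univ j0 (F i)]
  rw [Finset.sum_congr rfl (fun i _ => step1 i), Finset.sum_comm]
  refine Finset.sum_congr rfl (fun j _ => ?_)
  cases hfj : finv f j with
  | none =>
    have := finv_none_iff.mp hfj
    simp only [Option.elim_none]
    exact Finset.sum_eq_zero (fun i _ => by simp [this i])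
  | some i0 =>
    have hfi0 : f i0 = some j := finv_some_imp hfj
    simp only [Option.elim_some]
    rw [Finset.sum_eq_single i0]
    · simp [hfi0]
    · intro i _ hne
      have : f i ≠ some j := fun hc => hne (hf hc hfi0)
      simp [this]
    · simp

lemma sum_elim_le {m n : ℕ} {f : Fin m → Option (Fin n)} (hf : pinj f)
    (F : Fin n → ℝ) (hF : ∀ k, 0 ≤ F k) :
    ∑ i, (f i).elim 0 F ≤ ∑ j, F j := by
  rw [sum_elim_eq hf (fun _ k => F k)]
  refine Finset.sum_le_sum (fun j _ => ?_)
  cases finv f j with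
  | none => simpa using hF j
  | some i => simp
/-! ### The matrix associated with a partial injection -/

open Classical in
/-- The assignment matrix associated with a partial injection. -/
noncomputable def toMat {nX nY : ℕ} (f : Fin nX → Option (Fin nY)) :
    Matrix (Fin (nX+1)) (Fin (nY+1)) ℝ :=
  Fin.lastCases
    (Fin.snoc (fun j => if finv f j = none then 1 else 0) 0)
    (fun i => Fin.snoc (fun j => if f i = some j then 1 else 0)
      (if f i = none then 1 else 0))

@[simp] lemma toMat_cs_cs {nX nY : ℕ} (f : Fin nX → Option (Fin nY))
    (i : Fin nX) (j : Fin nY) :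
    toMat f i.castSucc j.castSucc = if f i = some j then 1 else 0 := by
  simp [toMat]

@[simp] lemma toMat_cs_last {nX nY : ℕ} (f : Fin nX → Option (Fin nY)) (i : Fin nX) :
    toMat f i.castSucc (Fin.last nY) = if f i = none then 1 else 0 := by
  simp [toMat]

@[simp] lemma toMat_last_cs {nX nY : ℕ} (f : Fin nX → Option (Fin nY)) (j : Fin nY) :
    toMat f (Fin.last nX) j.castSucc = if finv f j = none then 1 else 0 := by
  simp [toMat]

@[simp] lemma toMat_last_last {nX nY : ℕ} (f : Fin nX → Option (Fin nY)) :
    toMat f (Fin.last nX) (Fin.last nY) = 0 := by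
  simp [toMat]

lemma toMat_mem {nX nY : ℕ} {f : Fin nX → Option (Fin nY)} (hf : pinj f) :
    toMat f ∈ Wset nX nY := by
  refine ⟨?_, ?_, ?_, by simp⟩
  · intro i j
    induction i using Fin.lastCases with
    | last =>
      induction j using Fin.lastCases with
      | last => simp
      | cast j => rw [toMat_last_cs]; split <;> simp
    | cast i =>
      induction j using Fin.lastCases with
      | last => rw [toMat_cs_last]; split <;> simp
      | cast j => rw [toMat_cs_cs]; split <;> simp
  · intro j
    rw [Fin.sum_univ_castSucc]
    simp only [toMat_cs_cs, toMat_last_cs]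
    cases hfj : finv f j with
    | none =>
      have hno := finv_none_iff.mp hfj
      rw [Finset.sum_eq_zero (fun i _ => by simp [hno i])]
      simp
    | some i0 =>
      have hfi0 : f i0 = some j := finv_some_imp hfj
      rw [Finset.sum_eq_single i0]
      · simp [hfi0]
      · intro i _ hne
        have : f i ≠ some j := fun hc => hne (hf hc hfi0)
        simp [this]
      · simp
  · intro i
    rw [Fin.sum_univ_castSucc]
    simp only [toMat_cs_cs, toMat_cs_last]
    cases hfi : f i with
    | none => simp
    | some j0 =>
      have hcong : ∀ j : Fin nY, (if (some j0 : Option (Fin nY)) = some j then (1:ℝ) else 0)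
          = if j0 = j then 1 else 0 := fun j => by simp
      rw [Finset.sum_congr rfl (fun j _ => hcong j)]
      simp [Finset.sum_ite_eq Finset.univ j0 (fun _ => (1:ℝ))]

/-! ### Extracting a partial injection from an assignment matrix -/

lemma row_unique {n : ℕ} {v : Fin n → ℝ} (h01 : ∀ j, v j = 0 ∨ v j = 1)
    (hsum : ∑ j, v j = 1) : ∃ j, v j = 1 ∧ ∀ j', v j' = 1 → j' = j := by
  have hex : ∃ j, v j = 1 := by
    by_contra hno
    push_neg at hno
    have : ∀ j, v j = 0 := fun j => (h01 j).resolve_right (hno j)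
    rw [Finset.sum_eq_zero (fun j _ => this j)] at hsum
    norm_num at hsum
  obtain ⟨j, hj⟩ := hex
  refine ⟨j, hj, fun j' hj' => ?_⟩
  by_contra hne
  have hsub : ({j', j} : Finset (Fin n)) ⊆ Finset.univ := Finset.subset_univ _
  have hle : ∑ k ∈ ({j', j} : Finset (Fin n)), v k ≤ ∑ k, v k :=
    Finset.sum_le_sum_of_subset_of_nonneg hsub
      (fun k _ _ => by rcases h01 k with h | h <;> rw [h] <;> norm_num)
  rw [Finset.sum_pair hne, hj, hj', hsum] at hle
  norm_num at hle

lemma exists_toMat {nX nY : ℕ} {W : Matrix (Fin (nX+1)) (Fin (nY+1)) ℝ}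
    (hW : W ∈ Wset nX nY) : ∃ f, pinj f ∧ toMat f = W := by
  classical
  obtain ⟨h01, hcol, hrow, hcorner⟩ := hW
  -- unique 1 in each row (over all of `Fin (nY+1)`)
  set f : Fin nX → Option (Fin nY) := fun i =>
    if h : ∃ j : Fin nY, W i.castSucc j.castSucc = 1 then some h.choose else none with hfdef
  have hf_some : ∀ {i j}, f i = some j ↔ W i.castSucc j.castSucc = 1 := by
    intro i j
    constructor
    · intro h
      rw [hfdef] at h
      simp only at h
      split at h
      · rename_i hex
        obtain rfl : hex.choose = j := by simpa using h
        exact hex.choose_spec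
      · simp at h
    · intro h
      rw [hfdef]
      simp only
      split
      · rename_i hex
        obtain ⟨j0, hj0, huniq⟩ := row_unique (fun j => h01 i.castSucc j) (hrow i)
        have e1 : (hex.choose : Fin nY).castSucc = j0 := huniq _ hex.choose_spec
        have e2 : j.castSucc = j0 := huniq _ h
        have : (hex.choose : Fin nY).castSucc = j.castSucc := by rw [e1, e2]
        exact congrArg some (Fin.castSucc_injective _ this)
      · rename_i hex
        exact absurd ⟨j, h⟩ hex
  have hf_none : ∀ {i}, f i = none ↔ W i.castSucc (Fin.last nY) = 1 := by
    intro i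
    obtain ⟨j0, hj0, huniq⟩ := row_unique (fun j => h01 i.castSucc j) (hrow i)
    constructor
    · intro h
      induction j0 using Fin.lastCases with
      | last => exact hj0
      | cast j =>
        exfalso
        have : f i = some j := hf_some.mpr hj0
        rw [h] at this; simp at this
    · intro h
      rw [hfdef]
      simp only
      split
      · rename_i hex
        exfalso
        have h1 : (hex.choose : Fin nY).castSucc = j0 := huniq _ hex.choose_spec
        have h2 : (Fin.last nY) = j0 := huniq _ h
        rw [← h2] at h1
        exact absurd h1 (by simp [Fin.ext_iff, Fin.is_lt]; omega)
      · rfl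
  -- column facts
  have hcol_unique : ∀ j : Fin nY, ∃ i0, W i0 j.castSucc = 1 ∧ ∀ i', W i' j.castSucc = 1 → i' = i0 :=
    fun j => row_unique (fun i => h01 i j.castSucc) (hcol j)
  have hpinj : pinj f := by
    intro i i' j hi hi'
    obtain ⟨i0, _, huniq⟩ := hcol_unique j
    have e1 : i.castSucc = i0 := huniq _ (hf_some.mp hi)
    have e2 : i'.castSucc = i0 := huniq _ (hf_some.mp hi')
    exact Fin.castSucc_injective _ (by rw [e1, e2])
  refine ⟨f, hpinj, ?_⟩
  ext i j
  induction i using Fin.lastCases with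
  | last =>
    induction j using Fin.lastCases with
    | last => rw [toMat_last_last, hcorner]
    | cast j =>
      rw [toMat_last_cs]
      obtain ⟨i0, hi0, huniq⟩ := hcol_unique j
      split
      · rename_i hnone
        have hno := finv_none_iff.mp hnone
        -- no i' < nX maps to j, so the unique 1 in column j is at `last`
        induction i0 using Fin.lastCases with
        | last => exact hi0.symm
        | cast i1 =>
          exfalso
          exact hno i1 (hf_some.mpr hi0)
      · rename_i hsome
        simp only [finv_none_iff] at hsome
        push_neg at hsome
        obtain ⟨i1, hi1⟩ := hsome
        have h2 : i1.castSucc = i0 := huniq _ (hf_some.mp hi1)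
        have : W (Fin.last nX) j.castSucc ≠ 1 := by
          intro hc
          have h3 : (Fin.last nX) = i0 := huniq _ hc
          rw [← h3] at h2
          exact absurd h2 (by simp [Fin.ext_iff, Fin.is_lt]; omega)
        rcases h01 (Fin.last nX) j.castSucc with h | h
        · exact h.symm
        · exact absurd h this
  | cast i =>
    induction j using Fin.lastCases with
    | last =>
      rw [toMat_cs_last]
      split
      · rename_i h; exact (hf_none.mp h).symm
      · rename_i h
        rcases h01 i.castSucc (Fin.last nY) with h2 | h2
        · exact h2.symm
        · exact absurd (hf_none.mpr h2) h
    | cast j =>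
      rw [toMat_cs_cs]
      split
      · rename_i h; exact (hf_some.mp h).symm
      · rename_i h
        rcases h01 i.castSucc j.castSucc with h2 | h2
        · exact h2.symm
        · exact absurd (hf_some.mpr h2) h
/-! ### The objective in terms of a partial injection -/

lemma trace_transpose_mul {m n : ℕ} (A B : Matrix (Fin m) (Fin n) ℝ) :
    Matrix.trace (Aᵀ * B) = ∑ i, ∑ j, A i j * B i j := by
  rw [Matrix.trace]
  simp only [Matrix.diag_apply, Matrix.mul_apply, Matrix.transpose_apply]
  rw [Finset.sum_comm]

lemma Dmat_cs_cs (p c : ℝ) (X Y : Graph 𝕏) (i : Fin X.n) (j : Fin Y.n) :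
    Dmat p c X Y i.castSucc j.castSucc = dist (X.nodes i) (Y.nodes j) ^ p := by
  simp [Dmat, Fin.is_lt]

lemma Dmat_cs_last (p c : ℝ) (X Y : Graph 𝕏) (i : Fin X.n) :
    Dmat p c X Y i.castSucc (Fin.last Y.n) = c ^ p / 2 := by
  simp [Dmat, Fin.is_lt]

lemma Dmat_last_cs (p c : ℝ) (X Y : Graph 𝕏) (j : Fin Y.n) :
    Dmat p c X Y (Fin.last X.n) j.castSucc = c ^ p / 2 := by
  simp [Dmat, Fin.is_lt]

lemma Dmat_last_last (p c : ℝ) (X Y : Graph 𝕏) :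
    Dmat p c X Y (Fin.last X.n) (Fin.last Y.n) = 0 := by
  simp [Dmat]

/-- The edge-mismatch matrix entry associated with a partial injection. -/
noncomputable def mE (X Y : Graph 𝕏) (f : Fin X.n → Option (Fin Y.n))
    (i : Fin X.n) (j : Fin Y.n) : ℝ :=
  (finv f j).elim 0 (fun i' => X.A i i') - (f i).elim 0 (fun j' => Y.A j' j)

lemma mismatch_apply {X Y : Graph 𝕏} {f : Fin X.n → Option (Fin Y.n)} (hf : pinj f)
    (i : Fin X.n) (j : Fin Y.n) :
    (X.A * topLeft (toMat f) - topLeft (toMat f) * Y.A) i j = mE X Y f i j := by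
  have h1 : (X.A * topLeft (toMat f)) i j = (finv f j).elim 0 (fun i' => X.A i i') := by
    rw [Matrix.mul_apply]
    have : ∀ m, X.A i m * topLeft (toMat f) m j = if f m = some j then X.A i m else 0 := by
      intro m
      rw [topLeft, toMat_cs_cs]
      split <;> simp
    rw [Finset.sum_congr rfl (fun m _ => this m)]
    cases hfj : finv f j with
    | none =>
      have hno := finv_none_iff.mp hfj
      simp only [Option.elim_none]
      exact Finset.sum_eq_zero (fun m _ => by simp [hno m])
    | some i0 =>
      have hfi0 : f i0 = some j := finv_some_imp hfj
      simp only [Option.elim_some]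
      rw [Finset.sum_eq_single i0]
      · simp [hfi0]
      · intro m _ hne
        have : f m ≠ some j := fun hcon => hne (hf hcon hfi0)
        simp [this]
      · simp
  have h2 : (topLeft (toMat f) * Y.A) i j = (f i).elim 0 (fun j' => Y.A j' j) := by
    rw [Matrix.mul_apply]
    have : ∀ m, topLeft (toMat f) i m * Y.A m j = if f i = some m then Y.A m j else 0 := by
      intro m
      rw [topLeft, toMat_cs_cs]
      split <;> simp
    rw [Finset.sum_congr rfl (fun m _ => this m)]
    cases hfi : f i with
    | none => simp
    | some j0 =>
      simp only [Option.elim_some, Option.some_inj]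
      simp [Finset.sum_ite_eq Finset.univ j0 (fun m => Y.A m j)]
  rw [Matrix.sub_apply, h1, h2, mE]

/-- The objective evaluated at the matrix of a partial injection. -/
lemma obj_toMat {p c ε : ℝ} {X Y : Graph 𝕏} {f : Fin X.n → Option (Fin Y.n)}
    (hf : pinj f) :
    obj p c ε X Y (toMat f) =
      (∑ i, (f i).elim (c ^ p / 2) (fun j => dist (X.nodes i) (Y.nodes j) ^ p)) +
      (∑ j, if finv f j = none then c ^ p / 2 else 0) +
      ε ^ p / 2 * ∑ i, ∑ j, |mE X Y f i j| := by
  rw [obj, trace_transpose_mul]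
  have hedge : onorm (X.A * topLeft (toMat f) - topLeft (toMat f) * Y.A)
      = ∑ i, ∑ j, |mE X Y f i j| := by
    rw [onorm]
    exact Finset.sum_congr rfl (fun i _ => Finset.sum_congr rfl
      (fun j _ => by rw [mismatch_apply hf]))
  rw [hedge]
  congr 1
  rw [Fin.sum_univ_castSucc]
  have hrow : ∀ i : Fin X.n,
      ∑ j, Dmat p c X Y i.castSucc j * toMat f i.castSucc j
        = (f i).elim (c ^ p / 2) (fun j => dist (X.nodes i) (Y.nodes j) ^ p) := by
    intro i
    rw [Fin.sum_univ_castSucc]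
    simp only [Dmat_cs_cs, Dmat_cs_last, toMat_cs_cs, toMat_cs_last]
    cases hfi : f i with
    | none =>
      simp only [Option.elim_none]
      rw [Finset.sum_eq_zero (fun j _ => by simp [hfi])]
      simp
    | some j0 =>
      simp only [Option.elim_some]
      rw [Finset.sum_eq_single j0]
      · simp [hfi]
      · intro j _ hne
        have hne' : ¬ ((some j0 : Option (Fin Y.n)) = some j) := by
          simp only [Option.some_inj]
          exact fun he => hne he.symm
        rw [if_neg hne', mul_zero]
      · simp
  have hlast : ∑ j, Dmat p c X Y (Fin.last X.n) j * toMat f (Fin.last X.n) j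
      = ∑ j, if finv f j = none then c ^ p / 2 else 0 := by
    rw [Fin.sum_univ_castSucc]
    simp only [Dmat_last_cs, Dmat_last_last, toMat_last_cs, toMat_last_last, mul_zero, add_zero]
    exact Finset.sum_congr rfl (fun j _ => by split <;> simp)
  rw [Finset.sum_congr rfl (fun i _ => hrow i), hlast]
/-! ### Basic properties of the set of objective values -/

/-- The set of objective values over binary assignment matrices. -/
def objSet (p c ε : ℝ) (X Y : Graph 𝕏) : Set ℝ :=
  {v | ∃ W ∈ Wset X.n Y.n, v = obj p c ε X Y W}

lemma gospa_eq (p c ε : ℝ) (X Y : Graph 𝕏) :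
    gospa p c ε X Y = sInf (objSet p c ε X Y) ^ (1 / p) := rfl

lemma objSet_nonempty (p c ε : ℝ) (X Y : Graph 𝕏) :
    (objSet p c ε X Y).Nonempty := by
  have hpinj : pinj (fun _ : Fin X.n => (none : Option (Fin Y.n))) := by
    intro i i' j h; simp at h
  exact ⟨_, _, toMat_mem hpinj, rfl⟩

lemma objSet_finite (p c ε : ℝ) (X Y : Graph 𝕏) :
    (objSet p c ε X Y).Finite := by
  have h1 : objSet p c ε X Y ⊆ (obj p c ε X Y) '' (Wset X.n Y.n) := by
    rintro v ⟨W, hW, rfl⟩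
    exact ⟨W, hW, rfl⟩
  have h2 : (Wset X.n Y.n : Set (Matrix (Fin (X.n+1)) (Fin (Y.n+1)) ℝ)) ⊆
      Set.range (toMat (nX := X.n) (nY := Y.n)) := by
    intro W hW
    obtain ⟨f, _, hf⟩ := exists_toMat hW
    exact ⟨f, hf⟩
  exact (((Set.finite_range _).subset h2).image _).subset h1

lemma obj_nonneg {p c ε : ℝ} (hp : 1 ≤ p) (hc : 0 ≤ c) (hε : 0 ≤ ε)
    {X Y : Graph 𝕏} {W : Matrix (Fin (X.n+1)) (Fin (Y.n+1)) ℝ}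
    (hW : ∀ i j, 0 ≤ W i j) : 0 ≤ obj p c ε X Y W := by
  have hD : ∀ i j, 0 ≤ Dmat p c X Y i j := by
    intro i j
    rw [Dmat]
    split
    · split
      · exact Real.rpow_nonneg dist_nonneg p
      · positivity
    · split
      · positivity
      · exact le_rfl
  rw [obj, trace_transpose_mul]
  have t1 : 0 ≤ ∑ i, ∑ j, Dmat p c X Y i j * W i j :=
    Finset.sum_nonneg fun i _ => Finset.sum_nonneg fun j _ =>
      mul_nonneg (hD i j) (hW i j)
  have t2 : 0 ≤ onorm (X.A * topLeft W - topLeft W * Y.A) :=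
    Finset.sum_nonneg fun i _ => Finset.sum_nonneg fun j _ => abs_nonneg _
  have t3 : 0 ≤ ε ^ p / 2 := by positivity
  exact add_nonneg t1 (mul_nonneg t3 t2)

lemma objSet_nonneg {p c ε : ℝ} (hp : 1 ≤ p) (hc : 0 ≤ c) (hε : 0 ≤ ε)
    (X Y : Graph 𝕏) : ∀ v ∈ objSet p c ε X Y, 0 ≤ v := by
  rintro v ⟨W, hW, rfl⟩
  exact obj_nonneg hp hc hε (fun i j => by rcases hW.1 i j with h | h <;> rw [h] <;> norm_num)

lemma sInf_objSet_nonneg {p c ε : ℝ} (hp : 1 ≤ p) (hc : 0 ≤ c) (hε : 0 ≤ ε)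
    (X Y : Graph 𝕏) : 0 ≤ sInf (objSet p c ε X Y) :=
  le_csInf (objSet_nonempty p c ε X Y) (objSet_nonneg hp hc hε X Y)

lemma sInf_objSet_mem (p c ε : ℝ) (X Y : Graph 𝕏) :
    sInf (objSet p c ε X Y) ∈ objSet p c ε X Y :=
  (objSet_nonempty p c ε X Y).csInf_mem (objSet_finite p c ε X Y)

lemma csInf_le_obj {p c ε : ℝ} {X Y : Graph 𝕏}
    {W : Matrix (Fin (X.n+1)) (Fin (Y.n+1)) ℝ} (hW : W ∈ Wset X.n Y.n) :
    sInf (objSet p c ε X Y) ≤ obj p c ε X Y W :=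
  csInf_le (objSet_finite p c ε X Y).bddBelow ⟨W, hW, rfl⟩

/-! ### Symmetry -/

lemma A_symm' (X : Graph 𝕏) (i j : Fin X.n) : X.A i j = X.A j i := by
  conv_lhs => rw [← X.A_symm]
  rfl

lemma transpose_mem_Wset {nX nY : ℕ} {W : Matrix (Fin (nX+1)) (Fin (nY+1)) ℝ}
    (hW : W ∈ Wset nX nY) : Wᵀ ∈ Wset nY nX := by
  obtain ⟨h01, hcol, hrow, hcorner⟩ := hW
  exact ⟨fun i j => h01 j i, hrow, hcol, hcorner⟩

lemma Dmat_symm (p c : ℝ) (X Y : Graph 𝕏) (i : Fin (Y.n+1)) (j : Fin (X.n+1)) :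
    Dmat p c Y X i j = Dmat p c X Y j i := by
  unfold Dmat
  by_cases hi : (i : ℕ) < Y.n <;> by_cases hj : (j : ℕ) < X.n <;>
    simp [hi, hj, dist_comm]

lemma obj_transpose (p c ε : ℝ) (X Y : Graph 𝕏)
    {W : Matrix (Fin (X.n+1)) (Fin (Y.n+1)) ℝ} :
    obj p c ε Y X Wᵀ = obj p c ε X Y W := by
  rw [obj, obj, trace_transpose_mul, trace_transpose_mul]
  congr 1
  · rw [Finset.sum_comm]
    exact Finset.sum_congr rfl fun j _ => Finset.sum_congr rfl fun i _ => by
      rw [Dmat_symm, Matrix.transpose_apply]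
  · congr 1
    have htop : topLeft (Wᵀ) = (topLeft W)ᵀ := by
      ext i j; rfl
    rw [htop, onorm, onorm, Finset.sum_comm]
    refine Finset.sum_congr rfl fun i _ => Finset.sum_congr rfl fun j _ => ?_
    have : (Y.A * (topLeft W)ᵀ - (topLeft W)ᵀ * X.A) j i
        = -((X.A * topLeft W - topLeft W * Y.A) i j) := by
      simp only [Matrix.sub_apply, Matrix.mul_apply, Matrix.transpose_apply, neg_sub]
      congr 1
      · exact Finset.sum_congr rfl fun m _ => by rw [A_symm' Y j m, mul_comm]
      · exact Finset.sum_congr rfl fun m _ => by rw [A_symm' X m i, mul_comm]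
    rw [this, abs_neg]

lemma objSet_symm (p c ε : ℝ) (X Y : Graph 𝕏) :
    objSet p c ε X Y = objSet p c ε Y X := by
  ext v
  constructor
  · rintro ⟨W, hW, rfl⟩
    exact ⟨Wᵀ, transpose_mem_Wset hW, (obj_transpose p c ε X Y).symm⟩
  · rintro ⟨W, hW, rfl⟩
    refine ⟨Wᵀ, transpose_mem_Wset hW, ?_⟩
    have h := obj_transpose p c ε X Y (W := Wᵀ)
    rw [Matrix.transpose_transpose] at h
    exact h

lemma gospa_symm (p c ε : ℝ) (X Y : Graph 𝕏) :
    gospa p c ε X Y = gospa p c ε Y X := by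
  rw [gospa_eq, gospa_eq, objSet_symm]
/-! ### Identity -/

lemma rpow_p_pos {p x : ℝ} (hp : 1 ≤ p) (hx : 0 < x) : 0 < x ^ p :=
  Real.rpow_pos_of_pos hx p

lemma p_ne_zero {p : ℝ} (hp : 1 ≤ p) : p ≠ 0 := by linarith

lemma gospa_zero_of_graphEq {p c ε : ℝ} (hp : 1 ≤ p) (hc : 0 < c) (hε : 0 < ε)
    {X Y : Graph 𝕏} (hXY : GraphEq X Y) : gospa p c ε X Y = 0 := by
  obtain ⟨hnodes, hedges⟩ := hXY
  -- build the bijection σ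
  have hex : ∀ i, ∃ j, Y.nodes j = X.nodes i := by
    intro i
    have : X.nodes i ∈ nodeSet Y := hnodes ▸ Set.mem_range_self i
    exact this
  choose σ hσ using hex
  have hσinj : Function.Injective σ := by
    intro i i' h
    apply X.nodes_inj
    rw [← hσ i, ← hσ i', h]
  have hσsurj : Function.Surjective σ := by
    intro j
    have : Y.nodes j ∈ nodeSet X := hnodes ▸ Set.mem_range_self j
    obtain ⟨i, hi⟩ := this
    exact ⟨i, Y.nodes_inj (by rw [hσ i, hi])⟩
  -- adjacency transfer
  have hA : ∀ i k, X.A i k = Y.A (σ i) (σ k) := by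
    intro i k
    rcases X.A_01 i k with h0 | h1
    · rcases Y.A_01 (σ i) (σ k) with h0' | h1'
      · rw [h0, h0']
      · exfalso
        have : (s(Y.nodes (σ i), Y.nodes (σ k)) : Sym2 𝕏) ∈ edgeSet Y := ⟨σ i, σ k, h1', rfl⟩
        rw [← hedges] at this
        obtain ⟨a, b, hab, he⟩ := this
        rw [hσ i, hσ k] at he
        rw [Sym2.eq_iff] at he
        rcases he with ⟨ha, hb⟩ | ⟨ha, hb⟩
        · obtain rfl := X.nodes_inj ha.symm
          obtain rfl := X.nodes_inj hb.symm
          rw [hab] at h0; norm_num at h0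
        · obtain rfl := X.nodes_inj ha.symm
          obtain rfl := X.nodes_inj hb.symm
          rw [← A_symm' X, hab] at h0; norm_num at h0
    · have : (s(X.nodes i, X.nodes k) : Sym2 𝕏) ∈ edgeSet X := ⟨i, k, h1, rfl⟩
      rw [hedges] at this
      obtain ⟨a, b, hab, he⟩ := this
      rw [← hσ i, ← hσ k] at he
      rw [Sym2.eq_iff] at he
      rcases he with ⟨ha, hb⟩ | ⟨ha, hb⟩
      · obtain rfl := Y.nodes_inj ha.symm
        obtain rfl := Y.nodes_inj hb.symm
        rw [h1, hab]
      · obtain rfl := Y.nodes_inj ha.symm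
        obtain rfl := Y.nodes_inj hb.symm
        rw [h1, ← A_symm' Y, hab]
  -- the assignment
  set f : Fin X.n → Option (Fin Y.n) := fun i => some (σ i) with hfdef
  have hpinj : pinj f := by
    intro i i' j h h'
    rw [hfdef] at h h'
    simp only [Option.some_inj] at h h'
    exact hσinj (h.trans h'.symm)
  have hz : obj p c ε X Y (toMat f) = 0 := by
    rw [obj_toMat hpinj]
    have e1 : ∑ i, (f i).elim (c ^ p / 2) (fun j => dist (X.nodes i) (Y.nodes j) ^ p) = 0 := by
      refine Finset.sum_eq_zero fun i _ => ?_
      show (some (σ i)).elim _ _ = 0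
      rw [Option.elim_some]
      rw [show dist (X.nodes i) (Y.nodes (σ i)) = 0 from by rw [hσ i, dist_self]]
      exact Real.zero_rpow (p_ne_zero hp)
    have e2 : ∑ j, (if finv f j = none then c ^ p / 2 else 0) = 0 := by
      refine Finset.sum_eq_zero fun j _ => ?_
      obtain ⟨i, rfl⟩ := hσsurj j
      rw [if_neg]
      rw [finv_some_of hpinj (show f i = some (σ i) from rfl)]
      simp
    have e3 : ∀ i j, mE X Y f i j = 0 := by
      intro i j
      obtain ⟨k, rfl⟩ := hσsurj j
      rw [mE, finv_some_of hpinj (show f k = some (σ k) from rfl)]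
      show X.A i k - (Y.A (σ i) (σ k)) = 0
      rw [hA i k]; ring
    rw [e1, e2]
    simp only [add_zero, zero_add]
    rw [Finset.sum_eq_zero fun i _ => Finset.sum_eq_zero fun j _ => by rw [e3 i j, abs_zero]]
    ring
  have hle : sInf (objSet p c ε X Y) ≤ 0 := hz ▸ csInf_le_obj (toMat_mem hpinj)
  have hge := sInf_objSet_nonneg hp hc.le hε.le X Y
  rw [gospa_eq, le_antisymm hle hge]
  exact Real.zero_rpow (by positivity)

lemma graphEq_of_gospa_zero {p c ε : ℝ} (hp : 1 ≤ p) (hc : 0 < c) (hε : 0 < ε)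
    {X Y : Graph 𝕏} (h0 : gospa p c ε X Y = 0) : GraphEq X Y := by
  have hsinf : sInf (objSet p c ε X Y) = 0 := by
    by_contra hne
    have hpos : 0 < sInf (objSet p c ε X Y) :=
      lt_of_le_of_ne (sInf_objSet_nonneg hp hc.le hε.le X Y) (Ne.symm hne)
    rw [gospa_eq] at h0
    exact absurd h0 (ne_of_gt (Real.rpow_pos_of_pos hpos _))
  obtain ⟨W, hW, hobj⟩ := hsinf ▸ sInf_objSet_mem p c ε X Y
  obtain ⟨f, hpinj, rfl⟩ := exists_toMat hW
  rw [obj_toMat hpinj] at hobj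
  -- each of the three parts is nonnegative, so each is zero
  have hT1 : ∀ i : Fin X.n, 0 ≤ (f i).elim (c ^ p / 2) (fun j => dist (X.nodes i) (Y.nodes j) ^ p) := by
    intro i
    cases f i with
    | none => rw [Option.elim_none]; positivity
    | some j => rw [Option.elim_some]; exact Real.rpow_nonneg dist_nonneg p
  have hT2 : ∀ j : Fin Y.n, (0:ℝ) ≤ if finv f j = none then c ^ p / 2 else 0 := by
    intro j; split
    · positivity
    · exact le_rfl
  have h1 : 0 ≤ ∑ i, (f i).elim (c ^ p / 2) (fun j => dist (X.nodes i) (Y.nodes j) ^ p) :=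
    Finset.sum_nonneg fun i _ => hT1 i
  have h2 : 0 ≤ ∑ j, (if finv f j = none then c ^ p / 2 else 0 : ℝ) :=
    Finset.sum_nonneg fun j _ => hT2 j
  have h3 : 0 ≤ ε ^ p / 2 * ∑ i, ∑ j, |mE X Y f i j| := by
    have : (0:ℝ) ≤ ∑ i, ∑ j, |mE X Y f i j| :=
      Finset.sum_nonneg fun i _ => Finset.sum_nonneg fun j _ => abs_nonneg _
    positivity
  have hz1 : ∑ i, (f i).elim (c ^ p / 2) (fun j => dist (X.nodes i) (Y.nodes j) ^ p) = 0 := by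
    linarith
  have hz2 : ∑ j, (if finv f j = none then c ^ p / 2 else 0 : ℝ) = 0 := by linarith
  have hz3 : ε ^ p / 2 * ∑ i, ∑ j, |mE X Y f i j| = 0 := by linarith
  have hcp : 0 < c ^ p / 2 := by positivity
  -- f is total
  have hftot : ∀ i, ∃ j, f i = some j := by
    intro i
    have := (Finset.sum_eq_zero_iff_of_nonneg (fun i _ => hT1 i)).mp hz1 i (Finset.mem_univ i)
    cases hfi : f i with
    | none => rw [hfi, Option.elim_none] at this; exact absurd this (ne_of_gt hcp)
    | some j => exact ⟨j, rfl⟩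
  choose σ hσ using hftot
  have hdist : ∀ i, dist (X.nodes i) (Y.nodes (σ i)) = 0 := by
    intro i
    have := (Finset.sum_eq_zero_iff_of_nonneg (fun i _ => hT1 i)).mp hz1 i (Finset.mem_univ i)
    rw [hσ i, Option.elim_some] at this
    have hd := dist_nonneg (x := X.nodes i) (y := Y.nodes (σ i))
    by_contra hne
    exact absurd this (ne_of_gt (Real.rpow_pos_of_pos (lt_of_le_of_ne hd (Ne.symm hne)) p))
  have hnodes_eq : ∀ i, X.nodes i = Y.nodes (σ i) := fun i => dist_eq_zero.mp (hdist i)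
  have hσinj : Function.Injective σ := by
    intro i i' h
    exact hpinj (hσ i) (h ▸ hσ i')
  have hσsurj : Function.Surjective σ := by
    intro j
    have := (Finset.sum_eq_zero_iff_of_nonneg (fun j _ => hT2 j)).mp hz2 j (Finset.mem_univ j)
    by_cases hfj : finv f j = none
    · rw [if_pos hfj] at this; exact absurd this (ne_of_gt hcp)
    · obtain ⟨i, hi⟩ := Option.ne_none_iff_exists'.mp hfj
      have := finv_some_imp hi
      refine ⟨i, ?_⟩
      rw [hσ i] at this
      exact Option.some_inj.mp this
  have hAeq : ∀ i k, X.A i k = Y.A (σ i) (σ k) := by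
    intro i k
    have hmE : mE X Y f i (σ k) = 0 := by
      have hsum : ∑ i, ∑ j, |mE X Y f i j| = 0 := by
        rcases mul_eq_zero.mp hz3 with h | h
        · exact absurd h (ne_of_gt (by positivity))
        · exact h
      have h1 := (Finset.sum_eq_zero_iff_of_nonneg (fun i _ =>
        Finset.sum_nonneg (fun j _ => abs_nonneg (mE X Y f i j)))).mp hsum i (Finset.mem_univ i)
      have h2 := (Finset.sum_eq_zero_iff_of_nonneg (fun j _ =>
        abs_nonneg (mE X Y f i j))).mp h1 (σ k) (Finset.mem_univ (σ k))
      exact abs_eq_zero.mp h2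
    rw [mE, finv_some_of hpinj (hσ k), Option.elim_some, hσ i, Option.elim_some] at hmE
    linarith
  constructor
  · ext x
    constructor
    · rintro ⟨i, rfl⟩
      exact ⟨σ i, (hnodes_eq i).symm⟩
    · rintro ⟨j, rfl⟩
      obtain ⟨i, rfl⟩ := hσsurj j
      exact ⟨i, hnodes_eq i⟩
  · ext e
    constructor
    · rintro ⟨i, k, hik, rfl⟩
      exact ⟨σ i, σ k, (hAeq i k) ▸ hik, by rw [hnodes_eq i, hnodes_eq k]⟩
    · rintro ⟨a, b, hab, rfl⟩
      obtain ⟨i, rfl⟩ := hσsurj a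
      obtain ⟨k, rfl⟩ := hσsurj b
      exact ⟨i, k, by rw [hAeq i k]; exact hab, by rw [hnodes_eq i, hnodes_eq k]⟩
/-! ### Triangle inequality -/

lemma div_half_rpow {x p : ℝ} (hx : 0 ≤ x) (hp : 1 ≤ p) :
    (x / 2 ^ (1/p)) ^ p = x ^ p / 2 := by
  have hp0 : p ≠ 0 := p_ne_zero hp
  rw [Real.div_rpow hx (Real.rpow_nonneg (by norm_num) _),
    ← Real.rpow_mul (by norm_num : (0:ℝ) ≤ 2), one_div_mul_cancel hp0, Real.rpow_one]

lemma div_half_rpow' {x p : ℝ} (hx : 0 ≤ x) (hp : 1 ≤ p) :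
    (x / 2 ^ p⁻¹) ^ p = x ^ p / 2 := by
  rw [← one_div]; exact div_half_rpow hx hp

lemma scaled01_rpow {p ε t : ℝ} (hp : 1 ≤ p) (hε : 0 ≤ ε) (ht : t = 0 ∨ t = 1) :
    (ε / 2 ^ (1/p) * t) ^ p = ε ^ p / 2 * t := by
  rcases ht with rfl | rfl
  · rw [mul_zero, mul_zero, Real.zero_rpow (p_ne_zero hp)]
  · rw [mul_one, mul_one, div_half_rpow hε hp]

lemma mE_abs_01 (X Y : Graph 𝕏) (f : Fin X.n → Option (Fin Y.n)) (i : Fin X.n)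
    (j : Fin Y.n) : |mE X Y f i j| = 0 ∨ |mE X Y f i j| = 1 := by
  have hu : (finv f j).elim 0 (fun i' => X.A i i') = 0 ∨
      (finv f j).elim 0 (fun i' => X.A i i') = 1 := by
    cases finv f j with
    | none => left; rfl
    | some i' => exact X.A_01 i i'
  have hv : (f i).elim 0 (fun j' => Y.A j' j) = 0 ∨
      (f i).elim 0 (fun j' => Y.A j' j) = 1 := by
    cases f i with
    | none => left; rfl
    | some j' => exact Y.A_01 j' j
  rw [mE]
  rcases hu with h | h <;> rcases hv with h' | h' <;> rw [h, h'] <;> norm_num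

lemma pinj_bind {nX nZ nY : ℕ} {h : Fin nX → Option (Fin nZ)}
    {g : Fin nZ → Option (Fin nY)} (hh : pinj h) (hg : pinj g) :
    pinj (fun i => (h i).bind g) := by
  intro i i' j hi hi'
  obtain ⟨k, hk1, hk2⟩ := Option.bind_eq_some_iff.mp hi
  obtain ⟨k', hk1', hk2'⟩ := Option.bind_eq_some_iff.mp hi'
  obtain rfl : k = k' := hg hk2 hk2'
  exact hh hk1 hk1'

lemma finv_bind {nX nZ nY : ℕ} {h : Fin nX → Option (Fin nZ)}
    {g : Fin nZ → Option (Fin nY)} (hh : pinj h) (hg : pinj g) (j : Fin nY) :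
    finv (fun i => (h i).bind g) j = (finv g j).bind (finv h) := by
  cases hgj : finv g j with
  | none =>
    rw [Option.bind_none]
    rw [finv_none_iff]
    intro i hi
    obtain ⟨k, hk1, hk2⟩ := Option.bind_eq_some_iff.mp hi
    rw [finv_some_of hg hk2] at hgj
    simp at hgj
  | some k =>
    rw [Option.bind_some]
    have hgk : g k = some j := finv_some_imp hgj
    cases hhk : finv h k with
    | none =>
      rw [finv_none_iff]
      intro i hi
      obtain ⟨k', hk1, hk2⟩ := Option.bind_eq_some_iff.mp hi
      obtain rfl : k' = k := hg hk2 hgk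
      rw [finv_some_of hh hk1] at hhk
      simp at hhk
    | some i0 =>
      have hi0 : h i0 = some k := finv_some_imp hhk
      exact finv_some_of (pinj_bind hh hg) (by rw [hi0, Option.bind_some, hgk])

lemma sum_le_sum_of_inj {α β : Type*} [Fintype α] [Fintype β] [DecidableEq β] (L : α → ℝ) (R : β → ℝ)
    (hR : ∀ b, 0 ≤ R b) (m : α → β) (hm : Function.Injective m)
    (hle : ∀ a, L a ≤ R (m a)) : ∑ a, L a ≤ ∑ b, R b := by
  calc ∑ a, L a ≤ ∑ a, R (m a) := Finset.sum_le_sum (fun a _ => hle a)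
  _ = ∑ b ∈ Finset.univ.image m, R b := (Finset.sum_image (fun a _ a' _ hab => hm hab)).symm
  _ ≤ ∑ b, R b := Finset.sum_le_sum_of_subset_of_nonneg (Finset.subset_univ _)
      (fun b _ _ => hR b)

/-- The `X`–`Z` part of the atom decomposition. -/
noncomputable def avec (p c ε : ℝ) (X Z Y : Graph 𝕏)
    (h : Fin X.n → Option (Fin Z.n)) (g : Fin Z.n → Option (Fin Y.n)) :
    (Fin Z.n ⊕ (Fin X.n ⊕ Fin Y.n)) ⊕ (Fin X.n × Fin Y.n) → ℝ
  | .inl (.inl k) => (finv h k).elim (c / 2 ^ (1/p)) (fun i => dist (X.nodes i) (Z.nodes k))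
  | .inl (.inr (.inl i)) => if h i = none then c / 2 ^ (1/p) else 0
  | .inl (.inr (.inr _)) => 0
  | .inr (i, j) => (ε / 2 ^ (1/p)) * (finv g j).elim 0 (fun k => |mE X Z h i k|)

/-- The `Z`–`Y` part of the atom decomposition. -/
noncomputable def bvec (p c ε : ℝ) (X Z Y : Graph 𝕏)
    (h : Fin X.n → Option (Fin Z.n)) (g : Fin Z.n → Option (Fin Y.n)) :
    (Fin Z.n ⊕ (Fin X.n ⊕ Fin Y.n)) ⊕ (Fin X.n × Fin Y.n) → ℝ
  | .inl (.inl k) => (g k).elim (c / 2 ^ (1/p)) (fun j => dist (Z.nodes k) (Y.nodes j))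
  | .inl (.inr (.inl _)) => 0
  | .inl (.inr (.inr j)) => if finv g j = none then c / 2 ^ (1/p) else 0
  | .inr (i, j) => (ε / 2 ^ (1/p)) * (h i).elim 0 (fun k => |mE Z Y g k j|)

lemma avec_nonneg {p c ε : ℝ} (hp : 1 ≤ p) (hc : 0 ≤ c) (hε : 0 ≤ ε)
    (X Z Y : Graph 𝕏) (h : Fin X.n → Option (Fin Z.n)) (g : Fin Z.n → Option (Fin Y.n)) :
    ∀ α, 0 ≤ avec p c ε X Z Y h g α := by
  have hc' : (0:ℝ) ≤ c / 2 ^ (1/p) := by positivity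
  have hε' : (0:ℝ) ≤ ε / 2 ^ (1/p) := by positivity
  rintro (⟨k | i | j⟩ | ⟨i, j⟩) <;> simp only [avec]
  · cases finv h k with
    | none => exact hc'
    | some i => exact dist_nonneg
  · split
    · exact hc'
    · exact le_rfl
  · exact le_rfl
  · refine mul_nonneg hε' ?_
    cases finv g j with
    | none => exact le_rfl
    | some k => exact abs_nonneg _
lemma bvec_nonneg {p c ε : ℝ} (hp : 1 ≤ p) (hc : 0 ≤ c) (hε : 0 ≤ ε)
    (X Z Y : Graph 𝕏) (h : Fin X.n → Option (Fin Z.n)) (g : Fin Z.n → Option (Fin Y.n)) :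
    ∀ α, 0 ≤ bvec p c ε X Z Y h g α := by
  have hc' : (0:ℝ) ≤ c / 2 ^ (1/p) := by positivity
  have hε' : (0:ℝ) ≤ ε / 2 ^ (1/p) := by positivity
  rintro (⟨k | i | j⟩ | ⟨i, j⟩) <;> simp only [bvec]
  · cases g k with
    | none => exact hc'
    | some j => exact dist_nonneg
  · exact le_rfl
  · split
    · exact hc'
    · exact le_rfl
  · refine mul_nonneg hε' ?_
    cases h i with
    | none => exact le_rfl
    | some k => exact abs_nonneg _
section avecbvec
variable {p c ε : ℝ} {X Z Y : Graph 𝕏} {h : Fin X.n → Option (Fin Z.n)}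
  {g : Fin Z.n → Option (Fin Y.n)}

@[simp] lemma avec_k (k : Fin Z.n) : avec p c ε X Z Y h g (.inl (.inl k)) =
    (finv h k).elim (c / 2 ^ (1/p)) (fun i => dist (X.nodes i) (Z.nodes k)) := rfl
@[simp] lemma avec_i (i : Fin X.n) : avec p c ε X Z Y h g (.inl (.inr (.inl i))) =
    if h i = none then c / 2 ^ (1/p) else 0 := rfl
@[simp] lemma avec_j (j : Fin Y.n) : avec p c ε X Z Y h g (.inl (.inr (.inr j))) = 0 := rfl
@[simp] lemma avec_e (e : Fin X.n × Fin Y.n) : avec p c ε X Z Y h g (.inr e) =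
    (ε / 2 ^ (1/p)) * (finv g e.2).elim 0 (fun k => |mE X Z h e.1 k|) := rfl
@[simp] lemma bvec_k (k : Fin Z.n) : bvec p c ε X Z Y h g (.inl (.inl k)) =
    (g k).elim (c / 2 ^ (1/p)) (fun j => dist (Z.nodes k) (Y.nodes j)) := rfl
@[simp] lemma bvec_i (i : Fin X.n) : bvec p c ε X Z Y h g (.inl (.inr (.inl i))) = 0 := rfl
@[simp] lemma bvec_j (j : Fin Y.n) : bvec p c ε X Z Y h g (.inl (.inr (.inr j))) =
    if finv g j = none then c / 2 ^ (1/p) else 0 := rfl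
@[simp] lemma bvec_e (e : Fin X.n × Fin Y.n) : bvec p c ε X Z Y h g (.inr e) =
    (ε / 2 ^ (1/p)) * (h e.1).elim 0 (fun k => |mE Z Y g k e.2|) := rfl

lemma sum_avec_le (hp : 1 ≤ p) (hc : 0 < c) (hε : 0 < ε) (hh : pinj h) (hg : pinj g) :
    ∑ α, (avec p c ε X Z Y h g α) ^ p ≤ obj p c ε X Z (toMat h) := by
  rw [obj_toMat hh, Fintype.sum_sum_type, Fintype.sum_sum_type, Fintype.sum_sum_type]
  simp only [avec_k, avec_i, avec_j, avec_e]
  have e1 : ∑ k, ((finv h k).elim (c / 2 ^ (1/p)) (fun i => dist (X.nodes i) (Z.nodes k))) ^ p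
      = (∑ i, (h i).elim 0 (fun k => dist (X.nodes i) (Z.nodes k) ^ p))
        + ∑ k, (if finv h k = none then c ^ p / 2 else 0) := by
    rw [sum_elim_eq hh (fun i k => dist (X.nodes i) (Z.nodes k) ^ p),
      ← Finset.sum_add_distrib]
    refine Finset.sum_congr rfl fun k _ => ?_
    cases hk : finv h k with
    | none => simp [div_half_rpow hc.le hp, div_half_rpow' hc.le hp]
    | some i => simp
  have e2 : ∑ i, (if h i = none then c / 2 ^ (1/p) else (0:ℝ)) ^ p
      = ∑ i, if h i = none then c ^ p / 2 else 0 := by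
    refine Finset.sum_congr rfl fun i _ => ?_
    split
    · exact div_half_rpow hc.le hp
    · exact Real.zero_rpow (p_ne_zero hp)
  have e3 : ∑ i, (h i).elim 0 (fun k => dist (X.nodes i) (Z.nodes k) ^ p)
      + ∑ i, (if h i = none then c ^ p / 2 else (0:ℝ))
      = ∑ i, (h i).elim (c ^ p / 2) (fun k => dist (X.nodes i) (Z.nodes k) ^ p) := by
    rw [← Finset.sum_add_distrib]
    refine Finset.sum_congr rfl fun i _ => ?_
    cases h i <;> simp
  have e4 : ∑ _j : Fin Y.n, (0:ℝ) ^ p = 0 := by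
    simp [Real.zero_rpow (p_ne_zero hp)]
  have e5 : ∑ e : Fin X.n × Fin Y.n,
      ((ε / 2 ^ (1/p)) * (finv g e.2).elim 0 (fun k => |mE X Z h e.1 k|)) ^ p
      ≤ ε ^ p / 2 * ∑ i, ∑ k, |mE X Z h i k| := by
    rw [Fintype.sum_prod_type]
    have hpt : ∀ (i : Fin X.n) (j : Fin Y.n),
        ((ε / 2 ^ (1/p)) * (finv g j).elim 0 (fun k => |mE X Z h i k|)) ^ p
        = ε ^ p / 2 * (finv g j).elim 0 (fun k => |mE X Z h i k|) := by
      intro i j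
      refine scaled01_rpow hp hε.le ?_
      cases finv g j with
      | none => left; rfl
      | some k => exact mE_abs_01 X Z h i k
    calc ∑ i, ∑ j, ((ε / 2 ^ (1/p)) * (finv g j).elim 0 (fun k => |mE X Z h i k|)) ^ p
        = ∑ i, ε ^ p / 2 * ∑ j, (finv g j).elim 0 (fun k => |mE X Z h i k|) := by
          refine Finset.sum_congr rfl fun i _ => ?_
          rw [Finset.mul_sum]
          exact Finset.sum_congr rfl fun j _ => hpt i j
      _ ≤ ∑ i, ε ^ p / 2 * ∑ k, |mE X Z h i k| := by
          refine Finset.sum_le_sum fun i _ => ?_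
          refine mul_le_mul_of_nonneg_left ?_ (by positivity)
          exact sum_elim_le (pinj_finv g) _ (fun k => abs_nonneg _)
      _ = ε ^ p / 2 * ∑ i, ∑ k, |mE X Z h i k| := by rw [← Finset.mul_sum]
  rw [e1, e2, e4]
  linarith [e5, e3]

lemma sum_bvec_le (hp : 1 ≤ p) (hc : 0 < c) (hε : 0 < ε) (hh : pinj h) (hg : pinj g) :
    ∑ α, (bvec p c ε X Z Y h g α) ^ p ≤ obj p c ε Z Y (toMat g) := by
  rw [obj_toMat hg, Fintype.sum_sum_type, Fintype.sum_sum_type, Fintype.sum_sum_type]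
  simp only [bvec_k, bvec_i, bvec_j, bvec_e]
  have e1 : ∑ k, ((g k).elim (c / 2 ^ (1/p)) (fun j => dist (Z.nodes k) (Y.nodes j))) ^ p
      = ∑ k, (g k).elim (c ^ p / 2) (fun j => dist (Z.nodes k) (Y.nodes j) ^ p) := by
    refine Finset.sum_congr rfl fun k _ => ?_
    cases g k with
    | none => simp [div_half_rpow hc.le hp, div_half_rpow' hc.le hp]
    | some j => simp
  have e2 : ∑ i : Fin X.n, (0:ℝ) ^ p = 0 := by
    simp [Real.zero_rpow (p_ne_zero hp)]
  have e3 : ∑ j, (if finv g j = none then c / 2 ^ (1/p) else (0:ℝ)) ^ p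
      = ∑ j, if finv g j = none then c ^ p / 2 else 0 := by
    refine Finset.sum_congr rfl fun j _ => ?_
    split
    · exact div_half_rpow hc.le hp
    · exact Real.zero_rpow (p_ne_zero hp)
  have e5 : ∑ e : Fin X.n × Fin Y.n,
      ((ε / 2 ^ (1/p)) * (h e.1).elim 0 (fun k => |mE Z Y g k e.2|)) ^ p
      ≤ ε ^ p / 2 * ∑ k, ∑ j, |mE Z Y g k j| := by
    rw [Fintype.sum_prod_type]
    have hpt : ∀ (i : Fin X.n) (j : Fin Y.n),
        ((ε / 2 ^ (1/p)) * (h i).elim 0 (fun k => |mE Z Y g k j|)) ^ p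
        = ε ^ p / 2 * (h i).elim 0 (fun k => |mE Z Y g k j|) := by
      intro i j
      refine scaled01_rpow hp hε.le ?_
      cases h i with
      | none => left; rfl
      | some k => exact mE_abs_01 Z Y g k j
    calc ∑ i, ∑ j, ((ε / 2 ^ (1/p)) * (h i).elim 0 (fun k => |mE Z Y g k j|)) ^ p
        = ∑ j, ∑ i, ε ^ p / 2 * (h i).elim 0 (fun k => |mE Z Y g k j|) := by
          rw [Finset.sum_comm]
          exact Finset.sum_congr rfl fun j _ => Finset.sum_congr rfl fun i _ => hpt i j
      _ = ∑ j, ε ^ p / 2 * ∑ i, (h i).elim 0 (fun k => |mE Z Y g k j|) := by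
          exact Finset.sum_congr rfl fun j _ => (Finset.mul_sum _ _ _).symm
      _ ≤ ∑ j, ε ^ p / 2 * ∑ k, |mE Z Y g k j| := by
          refine Finset.sum_le_sum fun j _ => ?_
          refine mul_le_mul_of_nonneg_left ?_ (by positivity)
          exact sum_elim_le hh _ (fun k => abs_nonneg _)
      _ = ε ^ p / 2 * ∑ k, ∑ j, |mE Z Y g k j| := by
          rw [← Finset.mul_sum, Finset.sum_comm]
  rw [e1, e2, e3]
  linarith [e5]

end avecbvec
section objbind
variable {p c ε : ℝ} {X Z Y : Graph 𝕏} {h : Fin X.n → Option (Fin Z.n)}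
  {g : Fin Z.n → Option (Fin Y.n)}

lemma obj_bind_le (hp : 1 ≤ p) (hc : 0 < c) (hε : 0 < ε) (hh : pinj h) (hg : pinj g) :
    obj p c ε X Y (toMat (fun i => (h i).bind g)) ≤
      ∑ α, (avec p c ε X Z Y h g α + bvec p c ε X Z Y h g α) ^ p := by
  have hp0 : (0:ℝ) ≤ p := by linarith
  have hc' : (0:ℝ) ≤ c / 2 ^ (1/p) := by positivity
  have hε' : (0:ℝ) ≤ ε / 2 ^ (1/p) := by positivity
  have key_c : (c / 2 ^ (1/p)) ^ p = c ^ p / 2 := div_half_rpow hc.le hp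
  set f : Fin X.n → Option (Fin Y.n) := fun i => (h i).bind g with hfdef
  have hfi : ∀ i, f i = (h i).bind g := fun _ => rfl
  have hfinj : pinj f := pinj_bind hh hg
  have hcomp : ∀ j, finv f j = (finv g j).bind (finv h) := fun j => finv_bind hh hg j
  have hRnn : ∀ α, 0 ≤ (avec p c ε X Z Y h g α + bvec p c ε X Z Y h g α) ^ p :=
    fun α => Real.rpow_nonneg
      (add_nonneg (avec_nonneg hp hc.le hε.le X Z Y h g α)
        (bvec_nonneg hp hc.le hε.le X Z Y h g α)) p
  rw [obj_toMat hfinj, Fintype.sum_sum_type]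
  -- the node part
  have hnode :
      (∑ i, (f i).elim (c ^ p / 2) (fun j => dist (X.nodes i) (Y.nodes j) ^ p)) +
      (∑ j, if finv f j = none then c ^ p / 2 else 0) ≤
      ∑ α : Fin Z.n ⊕ (Fin X.n ⊕ Fin Y.n),
        (avec p c ε X Z Y h g (Sum.inl α) + bvec p c ε X Z Y h g (Sum.inl α)) ^ p := by
    have hkey := sum_le_sum_of_inj
      (Sum.elim
        (fun i => (f i).elim (c ^ p / 2) (fun j => dist (X.nodes i) (Y.nodes j) ^ p))
        (fun j => if finv f j = none then c ^ p / 2 else (0:ℝ)))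
      (fun α => (avec p c ε X Z Y h g (Sum.inl α) + bvec p c ε X Z Y h g (Sum.inl α)) ^ p)
      (fun α => hRnn _)
      (Sum.elim
        (fun i => (h i).elim (Sum.inr (Sum.inl i)) (fun k => Sum.inl k))
        (fun j => (finv f j).elim
          ((finv g j).elim (Sum.inr (Sum.inr j)) (fun k => Sum.inl k))
          (fun _ => Sum.inr (Sum.inr j))))
      ?_ ?_
    · rw [Fintype.sum_sum_type] at hkey
      simp only [Sum.elim_inl, Sum.elim_inr] at hkey
      exact hkey
    · -- injectivity
      have hcross : ∀ (i : Fin X.n) (j : Fin Y.n),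
          (h i).elim (Sum.inr (Sum.inl i)) (fun k => (Sum.inl k : Fin Z.n ⊕ (Fin X.n ⊕ Fin Y.n)))
          ≠ (finv f j).elim
            ((finv g j).elim (Sum.inr (Sum.inr j)) (fun k => Sum.inl k))
            (fun _ => Sum.inr (Sum.inr j)) := by
        intro i j he
        cases hhi : h i with
        | none =>
          rw [hhi, Option.elim_none] at he
          cases hFj : finv f j with
          | some i0 => rw [hFj, Option.elim_some] at he; simp at he
          | none =>
            rw [hFj, Option.elim_none] at he
            cases hgj : finv g j with
            | none => rw [hgj, Option.elim_none] at he; simp at he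
            | some k => rw [hgj, Option.elim_some] at he; simp at he
        | some k =>
          rw [hhi, Option.elim_some] at he
          cases hFj : finv f j with
          | some i0 => rw [hFj, Option.elim_some] at he; simp at he
          | none =>
            rw [hFj, Option.elim_none] at he
            cases hgj : finv g j with
            | none => rw [hgj, Option.elim_none] at he; simp at he
            | some k2 =>
              rw [hgj, Option.elim_some] at he
              simp only [Sum.inl.injEq] at he
              subst he
              have hgk : g k = some j := finv_some_imp hgj
              have : f i = some j := by rw [hfi i, hhi, Option.bind_some, hgk]
              rw [finv_some_of hfinj this] at hFj
              simp at hFj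
      rintro (i | j) (i' | j') he
      · simp only [Sum.elim_inl] at he
        cases hhi : h i with
        | none =>
          rw [hhi, Option.elim_none] at he
          cases hhi' : h i' with
          | none =>
            rw [hhi', Option.elim_none] at he
            simp only [Sum.inr.injEq, Sum.inl.injEq] at he
            rw [he]
          | some k' => rw [hhi', Option.elim_some] at he; simp at he
        | some k =>
          rw [hhi, Option.elim_some] at he
          cases hhi' : h i' with
          | none => rw [hhi', Option.elim_none] at he; simp at he
          | some k' =>
            rw [hhi', Option.elim_some] at he
            simp only [Sum.inl.injEq] at he
            subst he
            rw [hh hhi hhi']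
      · simp only [Sum.elim_inl, Sum.elim_inr] at he
        exact absurd he (hcross i j')
      · simp only [Sum.elim_inl, Sum.elim_inr] at he
        exact absurd he.symm (hcross i' j)
      · simp only [Sum.elim_inr] at he
        cases hFj : finv f j with
        | some i0 =>
          rw [hFj, Option.elim_some] at he
          cases hFj' : finv f j' with
          | some i0' =>
            rw [hFj', Option.elim_some] at he
            simp only [Sum.inr.injEq, Sum.inr.injEq] at he
            rw [he]
          | none =>
            rw [hFj', Option.elim_none] at he
            cases hgj' : finv g j' with
            | none => rw [hgj', Option.elim_none] at he; simp only [Sum.inr.injEq] at he; rw [he]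
            | some k' => rw [hgj', Option.elim_some] at he; simp at he
        | none =>
          rw [hFj, Option.elim_none] at he
          cases hgj : finv g j with
          | none =>
            rw [hgj, Option.elim_none] at he
            cases hFj' : finv f j' with
            | some i0' =>
              rw [hFj', Option.elim_some] at he
              simp only [Sum.inr.injEq] at he; rw [he]
            | none =>
              rw [hFj', Option.elim_none] at he
              cases hgj' : finv g j' with
              | none => rw [hgj', Option.elim_none] at he; simp only [Sum.inr.injEq] at he; rw [he]
              | some k' => rw [hgj', Option.elim_some] at he; simp at he
          | some k =>
            rw [hgj, Option.elim_some] at he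
            cases hFj' : finv f j' with
            | some i0' => rw [hFj', Option.elim_some] at he; simp at he
            | none =>
              rw [hFj', Option.elim_none] at he
              cases hgj' : finv g j' with
              | none => rw [hgj', Option.elim_none] at he; simp at he
              | some k' =>
                rw [hgj', Option.elim_some] at he
                simp only [Sum.inl.injEq] at he
                subst he
                rw [pinj_finv g hgj hgj']
    · -- pointwise bound
      rintro (i | j)
      · simp only [Sum.elim_inl]
        rcases Option.eq_none_or_eq_some (h i) with hhi | ⟨k, hhi⟩
        · have hfin : f i = none := by rw [hfi i, hhi, Option.bind_none]
          rw [hfin, Option.elim_none, hhi, Option.elim_none]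
          rw [avec_i, bvec_i, if_pos hhi, add_zero, key_c]
        · rw [hhi, Option.elim_some]
          rw [avec_k, bvec_k, finv_some_of hh hhi, Option.elim_some]
          rcases Option.eq_none_or_eq_some (g k) with hgk | ⟨j, hgk⟩
          · have hfin : f i = none := by rw [hfi i, hhi, Option.bind_some, hgk]
            rw [hfin, Option.elim_none, hgk, Option.elim_none, ← key_c]
            exact Real.rpow_le_rpow hc' (le_add_of_nonneg_left dist_nonneg) hp0
          · have hfin : f i = some j := by rw [hfi i, hhi, Option.bind_some, hgk]
            rw [hfin, Option.elim_some, hgk, Option.elim_some]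
            exact Real.rpow_le_rpow dist_nonneg
              (dist_triangle (X.nodes i) (Z.nodes k) (Y.nodes j)) hp0
      · simp only [Sum.elim_inr]
        rcases Option.eq_none_or_eq_some (finv f j) with hFj | ⟨i0, hFj⟩
        · rw [hFj, Option.elim_none, if_pos rfl]
          rcases Option.eq_none_or_eq_some (finv g j) with hgj | ⟨k, hgj⟩
          · rw [hgj, Option.elim_none, avec_j, bvec_j, if_pos hgj, zero_add, key_c]
          · rw [hgj, Option.elim_some]
            have hgk : g k = some j := finv_some_imp hgj
            have hhk : finv h k = none := by
              rcases Option.eq_none_or_eq_some (finv h k) with hhk | ⟨i0, hhk⟩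
              · exact hhk
              · exfalso
                have hf0 : f i0 = some j := by
                  rw [hfi i0, finv_some_imp hhk, Option.bind_some, hgk]
                rw [finv_some_of hfinj hf0] at hFj
                simp at hFj
            rw [avec_k, bvec_k, hhk, Option.elim_none, hgk, Option.elim_some, ← key_c]
            exact Real.rpow_le_rpow hc' (le_add_of_nonneg_right dist_nonneg) hp0
        · rw [hFj, Option.elim_some, if_neg (by simp)]
          exact hRnn _
  -- the edge part
  have hedge : ε ^ p / 2 * ∑ i, ∑ j, |mE X Y f i j| ≤
      ∑ e : Fin X.n × Fin Y.n,
        (avec p c ε X Z Y h g (Sum.inr e) + bvec p c ε X Z Y h g (Sum.inr e)) ^ p := by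
    rw [Fintype.sum_prod_type, Finset.mul_sum]
    refine Finset.sum_le_sum fun i _ => ?_
    rw [Finset.mul_sum]
    refine Finset.sum_le_sum fun j _ => ?_
    simp only [avec_e, bvec_e]
    set A2 := (finv g j).elim 0 (fun k => |mE X Z h i k|) with hA2
    set B2 := (h i).elim 0 (fun k => |mE Z Y g k j|) with hB2
    have hA01 : A2 = 0 ∨ A2 = 1 := by
      rw [hA2]
      cases finv g j with
      | none => left; rfl
      | some k => exact mE_abs_01 X Z h i k
    have hB01 : B2 = 0 ∨ B2 = 1 := by
      rw [hB2]
      cases h i with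
      | none => left; rfl
      | some k => exact mE_abs_01 Z Y g k j
    have hA2nn : 0 ≤ A2 := by rcases hA01 with h | h <;> rw [h] <;> norm_num
    have hB2nn : 0 ≤ B2 := by rcases hB01 with h | h <;> rw [h] <;> norm_num
    have key1 : |mE X Y f i j| ≤ A2 + B2 := by
      rw [hA2, hB2]
      rcases Option.eq_none_or_eq_some (h i) with hhi | ⟨k1, hhi⟩
      · rcases Option.eq_none_or_eq_some (finv g j) with hgj | ⟨k2, hgj⟩
        · have hFj : finv f j = none := by rw [hcomp j, hgj, Option.bind_none]
          have eM : mE X Y f i j = 0 := by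
            rw [mE, hFj, hfi i, hhi, Option.bind_none, Option.elim_none, Option.elim_none,
              sub_zero]
          rw [eM, hgj, hhi, Option.elim_none, Option.elim_none]
          simp
        · have hFj : finv f j = finv h k2 := by rw [hcomp j, hgj, Option.bind_some]
          have eM : mE X Y f i j = (finv h k2).elim 0 (fun i' => X.A i i') := by
            rw [mE, hFj, hfi i, hhi, Option.bind_none, Option.elim_none, sub_zero]
          have eA : mE X Z h i k2 = (finv h k2).elim 0 (fun i' => X.A i i') := by
            rw [mE, hhi, Option.elim_none, sub_zero]
          rw [eM, hgj, hhi, Option.elim_some, Option.elim_none, eA, add_zero]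
      · rcases Option.eq_none_or_eq_some (finv g j) with hgj | ⟨k2, hgj⟩
        · have hFj : finv f j = none := by rw [hcomp j, hgj, Option.bind_none]
          have eM : mE X Y f i j = -(g k1).elim 0 (fun j' => Y.A j' j) := by
            rw [mE, hFj, hfi i, hhi, Option.bind_some, Option.elim_none, zero_sub]
          have eB : mE Z Y g k1 j = -(g k1).elim 0 (fun j' => Y.A j' j) := by
            rw [mE, hgj, Option.elim_none, zero_sub]
          rw [eM, hgj, hhi]
          simp [eB]
        · have hFj : finv f j = finv h k2 := by rw [hcomp j, hgj, Option.bind_some]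
          have eM : mE X Y f i j = (finv h k2).elim 0 (fun i' => X.A i i')
              - (g k1).elim 0 (fun j' => Y.A j' j) := by
            rw [mE, hFj, hfi i, hhi, Option.bind_some]
          have eA : mE X Z h i k2 = (finv h k2).elim 0 (fun i' => X.A i i') - Z.A k1 k2 := by
            rw [mE, hhi, Option.elim_some]
          have eB : mE Z Y g k1 j = Z.A k1 k2 - (g k1).elim 0 (fun j' => Y.A j' j) := by
            rw [mE, hgj, Option.elim_some]
          rw [eM, hgj, hhi, Option.elim_some, Option.elim_some, eA, eB]
          exact abs_sub_le _ (Z.A k1 k2) _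
    have habs01 := mE_abs_01 X Y f i j
    have hfactor : ε / 2 ^ (1/p) * A2 + ε / 2 ^ (1/p) * B2
        = ε / 2 ^ (1/p) * (A2 + B2) := (mul_add _ _ _).symm
    rw [hfactor, Real.mul_rpow hε' (add_nonneg hA2nn hB2nn), div_half_rpow hε.le hp]
    refine mul_le_mul_of_nonneg_left ?_ (by positivity)
    rcases hA01 with hA | hA
    · rcases hB01 with hB | hB
      · rw [hA, hB] at key1 ⊢
        have h00 : (0:ℝ) + 0 = 0 := by norm_num
        rw [h00, Real.zero_rpow (p_ne_zero hp)]
        simpa using key1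
      · have h1 : (1:ℝ) ≤ A2 + B2 := by rw [hA, hB]; norm_num
        have h2 : |mE X Y f i j| ≤ 1 := by
          rcases habs01 with hh' | hh' <;> rw [hh'] <;> norm_num
        calc |mE X Y f i j| ≤ 1 := h2
        _ = 1 ^ p := (Real.one_rpow p).symm
        _ ≤ (A2 + B2) ^ p := Real.rpow_le_rpow zero_le_one h1 hp0
    · have h1 : (1:ℝ) ≤ A2 + B2 := by rw [hA]; linarith
      have h2 : |mE X Y f i j| ≤ 1 := by
        rcases habs01 with hh' | hh' <;> rw [hh'] <;> norm_num
      calc |mE X Y f i j| ≤ 1 := h2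
      _ = 1 ^ p := (Real.one_rpow p).symm
      _ ≤ (A2 + B2) ^ p := Real.rpow_le_rpow zero_le_one h1 hp0
  linarith [hnode, hedge]

end objbind
lemma gospa_triangle {p c ε : ℝ} (hp : 1 ≤ p) (hc : 0 < c) (hε : 0 < ε)
    (X Z Y : Graph 𝕏) : gospa p c ε X Y ≤ gospa p c ε X Z + gospa p c ε Z Y := by
  have hp0 : (0:ℝ) ≤ 1 / p := by positivity
  obtain ⟨W1, hW1, hW1e⟩ := sInf_objSet_mem p c ε X Z
  obtain ⟨W2, hW2, hW2e⟩ := sInf_objSet_mem p c ε Z Y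
  obtain ⟨h, hh, rfl⟩ := exists_toMat hW1
  obtain ⟨g, hg, rfl⟩ := exists_toMat hW2
  have hfinj : pinj (fun i => (h i).bind g) := pinj_bind hh hg
  have ha0 := avec_nonneg hp hc.le hε.le X Z Y h g
  have hb0 := bvec_nonneg hp hc.le hε.le X Z Y h g
  have step1 : sInf (objSet p c ε X Y) ≤ obj p c ε X Y (toMat (fun i => (h i).bind g)) :=
    csInf_le_obj (toMat_mem hfinj)
  have step2 := obj_bind_le (X := X) (Z := Z) (Y := Y) (h := h) (g := g) hp hc hε hh hg
  have minkow := Real.Lp_add_le_of_nonneg (s := (Finset.univ :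
      Finset ((Fin Z.n ⊕ (Fin X.n ⊕ Fin Y.n)) ⊕ (Fin X.n × Fin Y.n))))
    (f := avec p c ε X Z Y h g) (g := bvec p c ε X Z Y h g) hp
    (fun α _ => ha0 α) (fun α _ => hb0 α)
  have hobj_nn : 0 ≤ obj p c ε X Y (toMat (fun i => (h i).bind g)) := by
    refine obj_nonneg hp hc.le hε.le (fun i j => ?_)
    rcases (toMat_mem hfinj).1 i j with h' | h' <;> rw [h'] <;> norm_num
  have hsum_ab : 0 ≤ ∑ α, (avec p c ε X Z Y h g α + bvec p c ε X Z Y h g α) ^ p :=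
    Finset.sum_nonneg fun α _ => Real.rpow_nonneg (add_nonneg (ha0 α) (hb0 α)) p
  have hsa := sum_avec_le (X := X) (Z := Z) (Y := Y) hp hc hε hh hg
  have hsb := sum_bvec_le (X := X) (Z := Z) (Y := Y) hp hc hε hh hg
  have hsuma_nn : 0 ≤ ∑ α, (avec p c ε X Z Y h g α) ^ p :=
    Finset.sum_nonneg fun α _ => Real.rpow_nonneg (ha0 α) p
  have hsumb_nn : 0 ≤ ∑ α, (bvec p c ε X Z Y h g α) ^ p :=
    Finset.sum_nonneg fun α _ => Real.rpow_nonneg (hb0 α) p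
  rw [gospa_eq, gospa_eq, gospa_eq, hW1e, hW2e]
  calc (sInf (objSet p c ε X Y)) ^ (1/p)
      ≤ (obj p c ε X Y (toMat (fun i => (h i).bind g))) ^ (1/p) :=
        Real.rpow_le_rpow (sInf_objSet_nonneg hp hc.le hε.le X Y) step1 hp0
    _ ≤ (∑ α, (avec p c ε X Z Y h g α + bvec p c ε X Z Y h g α) ^ p) ^ (1/p) :=
        Real.rpow_le_rpow hobj_nn step2 hp0
    _ ≤ (∑ α, (avec p c ε X Z Y h g α) ^ p) ^ (1/p)
        + (∑ α, (bvec p c ε X Z Y h g α) ^ p) ^ (1/p) := minkow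
    _ ≤ (obj p c ε X Z (toMat h)) ^ (1/p) + (obj p c ε Z Y (toMat g)) ^ (1/p) :=
        add_le_add (Real.rpow_le_rpow hsuma_nn hsa hp0)
          (Real.rpow_le_rpow hsumb_nn hsb hp0)

/-- For `1 ≤ p < ∞`, `c > 0`, `ε > 0` and base metric `d`, the graph
GOSPA distance `d^{(c,ε)}`, defined by minimizing over the binary assignment matrices
`𝒲_{X,Y}`, is a metric on the space of undirected unweighted graphs with node
attributes: identity, symmetry and the triangle inequality hold. -/
theorem graph_gospa_is_metric (p c ε : ℝ) (hp : 1 ≤ p) (hc : 0 < c) (hε : 0 < ε) :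
    (∀ X Y : Graph 𝕏, gospa p c ε X Y = 0 ↔ GraphEq X Y) ∧
    (∀ X Y : Graph 𝕏, gospa p c ε X Y = gospa p c ε Y X) ∧
    (∀ X Y Z : Graph 𝕏,
      gospa p c ε X Y ≤ gospa p c ε X Z + gospa p c ε Z Y) := by
  exact ⟨fun X Y => ⟨fun h0 => graphEq_of_gospa_zero hp hc hε h0,
      fun hEq => gospa_zero_of_graphEq hp hc hε hEq⟩,
    fun X Y => gospa_symm p c ε X Y,
    fun X Y Z => gospa_triangle hp hc hε X Z Y⟩
end GraphGOSPA
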